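/- Let S be a Clifford module over Cl(V) for an inner product space V, with an invariant pairing ⟨·,·⟩ between S and its dual such that ⟨v·φ₁, φ₂⟩ is symmetric in φ₁, φ₂. Define Q(φ) ∈ V by (Q(φ), v) = ⟨v·φ, φ⟩ and f(ρ₁,ρ₂) = (Q(ρ₁), Q(ρ₂)). Then for any A ∈ GL(2,ℝ) acting on the pair (ρ₁,ρ₂) ∈ S ⊗ ℝ², f(A(ρ₁,ρ₂)) = (det A)² f(ρ₁,ρ₂). -/
import Mathlib
set_option maxHeartbeats 1000000


/-- let `S` be a Clifford module over `Cl(V)` (Clifford multiplication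
`m : V → S → T` into the opposite spinor space `T = S*`), with an invariant pairing
`pr : T × S → ℝ` such that `⟨v·φ₁, φ₂⟩ = pr (m v φ₁) φ₂` is symmetric in `φ₁, φ₂`.
Let `P : S × S → V` be the (symmetric bilinear) moment map defined by
`(P(φ₁,φ₂), v) = ⟨v·φ₁, φ₂⟩`, set `Q(φ) = P(φ,φ)` (which is a null vector of `V`, as for
the half-spinors of `Spin(5,5)`), and `f(ρ₁,ρ₂) = (Q(ρ₁), Q(ρ₂))`.  Then for any
`A ∈ GL(2,ℝ)` (indeed any 2×2 real matrix) acting on the `ℝ²` factor of `S ⊗ ℝ²`,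
`f(A(ρ₁,ρ₂)) = (det A)² f(ρ₁,ρ₂)`. -/
theorem quartic_relative_invariant
    (V S T : Type*) [AddCommGroup V] [Module ℝ V] [AddCommGroup S] [Module ℝ S]
    [AddCommGroup T] [Module ℝ T]
    (ip : V →ₗ[ℝ] V →ₗ[ℝ] ℝ) (hipsym : ∀ v w, ip v w = ip w v)
    (m : V →ₗ[ℝ] S →ₗ[ℝ] T) (pr : T →ₗ[ℝ] S →ₗ[ℝ] ℝ)
    (hsym : ∀ v φ ψ, pr (m v φ) ψ = pr (m v ψ) φ)
    (P : S →ₗ[ℝ] S →ₗ[ℝ] V)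
    (hP : ∀ φ ψ v, ip (P φ ψ) v = pr (m v φ) ψ)
    (hPsym : ∀ φ ψ, P φ ψ = P ψ φ)
    (hnull : ∀ φ : S, ip (P φ φ) (P φ φ) = 0)
    (ρ₁ ρ₂ : S) (A : Matrix (Fin 2) (Fin 2) ℝ) :
    ip (P (A 0 0 • ρ₁ + A 0 1 • ρ₂) (A 0 0 • ρ₁ + A 0 1 • ρ₂))
       (P (A 1 0 • ρ₁ + A 1 1 • ρ₂) (A 1 0 • ρ₁ + A 1 1 • ρ₂)) =
      A.det ^ 2 * ip (P ρ₁ ρ₁) (P ρ₂ ρ₂) := by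
  set a := P ρ₁ ρ₁ with ha
  set b := P ρ₁ ρ₂ with hb
  set c := P ρ₂ ρ₂ with hc
  have hba : P ρ₂ ρ₁ = b := (hPsym ρ₂ ρ₁)
  have expand : ∀ x y : ℝ,
      x^4 * ip a a + 4*x^3*y * ip a b + x^2*y^2 * (2 * ip a c + 4 * ip b b)
        + 4*x*y^3 * ip b c + y^4 * ip c c = 0 := by
    intro x y
    have h := hnull (x • ρ₁ + y • ρ₂)
    simp only [map_add, map_smul, LinearMap.add_apply, LinearMap.smul_apply,
      smul_eq_mul, hba, ← ha, ← hb, ← hc, smul_add] at h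
    linear_combination h + 2*x^3*y * hipsym a b + x^2*y^2 * hipsym a c
      + 2*x*y^3 * hipsym b c
  have haa : ip a a = 0 := hnull ρ₁
  have hcc : ip c c = 0 := hnull ρ₂
  have e1 := expand 1 1
  have e2 := expand 1 (-1)
  have e3 := expand 1 2
  have e4 := expand 2 1
  have hab : ip a b = 0 := by linarith [e1, e2, e3, e4, haa, hcc]
  have hbc : ip b c = 0 := by linarith [e1, e2, e3, e4, haa, hcc]
  have hw : 2 * ip a c + 4 * ip b b = 0 := by linarith [e1, e2, haa, hcc]
  simp only [map_add, map_smul, LinearMap.add_apply, LinearMap.smul_apply,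
    smul_eq_mul, hba, ← ha, ← hb, ← hc, Matrix.det_fin_two]
  linear_combination (A 0 0^2 * A 1 0^2) * haa + (A 0 1^2*A 1 1^2) * hcc
    + (A 0 0^2*A 1 0*A 1 1 + A 0 0*A 0 1*A 1 0^2) * hab
    + (A 0 0*A 0 1*A 1 1^2 + A 0 1^2*A 1 0*A 1 1) * hbc
    + (A 0 0*A 0 1*A 1 0*A 1 1) * hw
    + (A 0 0^2*A 1 0*A 1 1 + A 0 0*A 0 1*A 1 0^2) * hipsym b a
    + (A 0 1^2*A 1 0*A 1 1 + A 0 0*A 0 1*A 1 1^2) * hipsym c b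
    + (A 0 1^2*A 1 0^2 - A 0 0*A 0 1*A 1 0*A 1 1) * hipsym c a
    + (A 0 0*A 0 1*A 1 0*A 1 1) * hipsym c a
    + (A 1 0^2*A 0 0*A 0 1 - A 1 0*A 0 0^2*A 1 1) * hipsym b a
    + (A 1 0*A 0 0^2*A 1 1 + A 1 0^2*A 0 0*A 0 1) * hab
    + (A 1 0*A 0 1^2*A 1 1 - A 0 0*A 0 1*A 1 1^2) * hipsym c b
    + (A 0 0*A 0 1*A 1 1^2 + A 1 0*A 0 1^2*A 1 1) * hbc
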